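/- On ℝ⁸ = ℝ³ × ℝ × ℝ³ × ℝ with q(x,s,y,t) = x·y + st, every subspace of the form (a,b)₋ = { (x, −b·x, a×x + bt, t) : x ∈ ℝ³, t ∈ ℝ } with a, b ∈ ℝ³ is a maximal totally isotropic subspace of dimension 4, and for all a, b, a', b' ∈ ℝ³ the intersection (a,b)₊ ∩ (a',b')₋ has dimension 3 if and only if a' − a = b × b'. -/

import Mathlib

open Matrix

/-- `ℝ⁸ = ℝ³ × ℝ × ℝ³ × ℝ`. -/
abbrev V8 : Type := (Fin 3 → ℝ) × ℝ × (Fin 3 → ℝ) × ℝ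

/-- The quadratic form `q(x, s, y, t) = x·y + st` of signature `(4,4)`. -/
def q8 (p : V8) : ℝ := p.1 ⬝ᵥ p.2.2.1 + p.2.1 * p.2.2.2

/-- The set `(a,b)₊ = { (x, s, a×x + sb, −b·x) }`. -/
def plusSet (a b : Fin 3 → ℝ) : Set V8 :=
  {p | p.2.2.1 = a ⨯₃ p.1 + p.2.1 • b ∧ p.2.2.2 = -(b ⬝ᵥ p.1)}

/-- The set `(a,b)₋ = { (x, −b·x, a×x + tb, t) }`. -/
def minusSet (a b : Fin 3 → ℝ) : Set V8 :=
  {p | p.2.2.1 = a ⨯₃ p.1 + p.2.2.2 • b ∧ p.2.1 = -(b ⬝ᵥ p.1)}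


/-- Parametrization of `(a,b)₋`. -/
def Lminus (a b : Fin 3 → ℝ) : ((Fin 3 → ℝ) × ℝ) →ₗ[ℝ] V8 where
  toFun p := (p.1, -(b ⬝ᵥ p.1), a ⨯₃ p.1 + p.2 • b, p.2)
  map_add' p q := by
    refine Prod.ext rfl (Prod.ext ?_ (Prod.ext ?_ rfl))
    · simp [dotProduct_add]; ring
    · simp [map_add, add_smul]; module
  map_smul' r p := by
    refine Prod.ext rfl (Prod.ext ?_ (Prod.ext ?_ rfl))
    · simp [dotProduct_smul]
    · simp [_root_.map_smul]; module

/-- Parametrization of the intersection `(a,b)₊ ⊓ (a',b')₋`. -/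
def Fmap (a b b' : Fin 3 → ℝ) : (Fin 3 → ℝ) →ₗ[ℝ] V8 where
  toFun x := (x, -(b' ⬝ᵥ x), a ⨯₃ x + (-(b' ⬝ᵥ x)) • b, -(b ⬝ᵥ x))
  map_add' x y := by
    refine Prod.ext rfl (Prod.ext ?_ (Prod.ext ?_ ?_))
    · simp [dotProduct_add]; ring
    · simp [map_add, dotProduct_add, neg_add, add_smul]; module
    · simp [dotProduct_add]; ring
  map_smul' r x := by
    refine Prod.ext rfl (Prod.ext ?_ (Prod.ext ?_ ?_))
    · simp [dotProduct_smul]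
    · simp [_root_.map_smul, dotProduct_smul, smul_smul]
    · simp [dotProduct_smul]

theorem darboux_part1 (a b : Fin 3 → ℝ) (W : Submodule ℝ V8)
    (hW : (W : Set V8) = minusSet a b) :
    (∀ w ∈ W, q8 w = 0) ∧ Module.finrank ℝ W = 4 ∧
      ∀ W' : Submodule ℝ V8, (∀ w ∈ W', q8 w = 0) → W ≤ W' → W' = W := by
  have hmem : ∀ p : V8, p ∈ W ↔
      (p.2.2.1 = a ⨯₃ p.1 + p.2.2.2 • b ∧ p.2.1 = -(b ⬝ᵥ p.1)) := by
    intro p; rw [← SetLike.mem_coe, hW]; rfl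
  have hiso : ∀ w ∈ W, q8 w = 0 := by
    intro w hw
    obtain ⟨h1, h2⟩ := (hmem w).1 hw
    rw [q8, h1, h2, dotProduct_add, dotProduct_smul, dot_cross_self, dotProduct_comm]
    simp [smul_eq_mul]
    ring
  refine ⟨hiso, ?_, ?_⟩
  · have hinj : Function.Injective (Lminus a b) := by
      intro p q h
      exact Prod.ext (congrArg (fun r : V8 => r.1) h) (congrArg (fun r : V8 => r.2.2.2) h)
    have hr : W = LinearMap.range (Lminus a b) := by
      apply SetLike.coe_injective
      rw [hW]
      ext p
      constructor
      · rintro ⟨h1, h2⟩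
        refine ⟨(p.1, p.2.2.2), ?_⟩
        show (p.1, -(b ⬝ᵥ p.1), a ⨯₃ p.1 + p.2.2.2 • b, p.2.2.2) = p
        rw [← h1, ← h2]
      · rintro ⟨⟨u, τ⟩, rfl⟩
        exact ⟨rfl, rfl⟩
    rw [hr, LinearMap.finrank_range_of_inj hinj]
    simp [Module.finrank_prod, Module.finrank_fin_fun]
  · intro W' hIso hle
    refine le_antisymm ?_ hle
    rintro ⟨x, s, y, t⟩ hp
    have key : ∀ (u : Fin 3 → ℝ) (τ : ℝ),
        x ⬝ᵥ (a ⨯₃ u + τ • b) + u ⬝ᵥ y + s * τ + (-(b ⬝ᵥ u)) * t = 0 := by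
      intro u τ
      have hw : ((u, -(b ⬝ᵥ u), a ⨯₃ u + τ • b, τ) : V8) ∈ W := (hmem _).2 ⟨rfl, rfl⟩
      have h1 := hIso _ (W'.add_mem hp (hle hw))
      have h2 := hIso _ hp
      have h3 := hIso _ (hle hw)
      simp only [q8, Prod.fst_add, Prod.snd_add, add_dotProduct, dotProduct_add] at h1 h2 h3 ⊢
      ring_nf at h1 h2 h3 ⊢
      linarith
    have e0 := key ![1,0,0] 0
    have e1 := key ![0,1,0] 0
    have e2 := key ![0,0,1] 0
    have es := key 0 1
    simp [cross_apply, dotProduct, Fin.sum_univ_three] at e0 e1 e2 es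
    refine (hmem _).2 ⟨?_, ?_⟩
    · funext i
      fin_cases i <;>
        simp [cross_apply, dotProduct, Fin.sum_univ_three] <;> linarith
    · show s = _
      simp [dotProduct, Fin.sum_univ_three]
      linarith

theorem darboux_part2 (a b a' b' : Fin 3 → ℝ) (Wp Wm : Submodule ℝ V8)
    (hWp : (Wp : Set V8) = plusSet a b) (hWm : (Wm : Set V8) = minusSet a' b') :
    (Module.finrank ℝ ↥(Wp ⊓ Wm) = 3 ↔ a' - a = b ⨯₃ b') := by
  set c : Fin 3 → ℝ := a' - a - b ⨯₃ b' with hc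
  have hmemp : ∀ p : V8, p ∈ Wp ↔
      (p.2.2.1 = a ⨯₃ p.1 + p.2.1 • b ∧ p.2.2.2 = -(b ⬝ᵥ p.1)) := by
    intro p; rw [← SetLike.mem_coe, hWp]; rfl
  have hmemm : ∀ p : V8, p ∈ Wm ↔
      (p.2.2.1 = a' ⨯₃ p.1 + p.2.2.2 • b' ∧ p.2.1 = -(b' ⬝ᵥ p.1)) := by
    intro p; rw [← SetLike.mem_coe, hWm]; rfl
  have hinj : Function.Injective (Fmap a b b') := fun u v h =>
    congrArg (fun r : V8 => r.1) h
  have hmap : Submodule.map (Fmap a b b') (LinearMap.ker (crossProduct c)) = Wp ⊓ Wm := by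
    ext p
    simp only [Submodule.mem_map, LinearMap.mem_ker, Submodule.mem_inf]
    constructor
    · rintro ⟨u, hu, rfl⟩
      have h0 := congrFun hu 0
      have h1 := congrFun hu 1
      have h2 := congrFun hu 2
      simp [hc, cross_apply, vecHead, vecTail, Pi.sub_apply] at h0 h1 h2
      refine ⟨(hmemp _).2 ⟨rfl, rfl⟩, (hmemm _).2 ⟨?_, rfl⟩⟩
      show a ⨯₃ u + (-(b' ⬝ᵥ u)) • b = a' ⨯₃ u + (-(b ⬝ᵥ u)) • b'
      funext i
      fin_cases i
      · simp [cross_apply, dotProduct, Fin.sum_univ_three]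
        first | linear_combination h0 | linear_combination -h0
      · simp [cross_apply, dotProduct, Fin.sum_univ_three]
        first | linear_combination h1 | linear_combination -h1
      · simp [cross_apply, dotProduct, Fin.sum_univ_three]
        first | linear_combination h2 | linear_combination -h2
    · rintro ⟨hp, hm⟩
      obtain ⟨x, s, y, t⟩ := p
      obtain ⟨hp1, hp2⟩ := (hmemp _).1 hp
      obtain ⟨hm1, hm2⟩ := (hmemm _).1 hm
      simp only at hp1 hp2 hm1 hm2
      subst hp2
      subst hm2
      have hy : a ⨯₃ x + (-(b' ⬝ᵥ x)) • b = a' ⨯₃ x + (-(b ⬝ᵥ x)) • b' := by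
        rw [← hp1, ← hm1]
      have h0 := congrFun hy 0
      have h1 := congrFun hy 1
      have h2 := congrFun hy 2
      simp [cross_apply, dotProduct, Fin.sum_univ_three] at h0 h1 h2
      refine ⟨x, ?_, ?_⟩
      · funext i
        fin_cases i
        · simp [hc, cross_apply, vecHead, vecTail, Pi.sub_apply, dotProduct,
            Fin.sum_univ_three]
          first | linear_combination h0 | linear_combination -h0
        · simp [hc, cross_apply, vecHead, vecTail, Pi.sub_apply, dotProduct,
            Fin.sum_univ_three]
          first | linear_combination h1 | linear_combination -h1
        · simp [hc, cross_apply, vecHead, vecTail, Pi.sub_apply, dotProduct,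
            Fin.sum_univ_three]
          first | linear_combination h2 | linear_combination -h2
      · show (x, -(b' ⬝ᵥ x), a ⨯₃ x + (-(b' ⬝ᵥ x)) • b, -(b ⬝ᵥ x))
            = (x, -(b' ⬝ᵥ x), y, -(b ⬝ᵥ x))
        refine Prod.ext rfl (Prod.ext rfl (Prod.ext ?_ rfl))
        exact hp1.symm
  have hrank : Module.finrank ℝ ↥(Wp ⊓ Wm) =
      Module.finrank ℝ ↥(LinearMap.ker (crossProduct c)) := by
    rw [← hmap]
    exact ((Submodule.equivMapOfInjective _ hinj _).finrank_eq).symm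
  rw [hrank]
  have hceq : (a' - a = b ⨯₃ b') ↔ c = 0 := by rw [hc, sub_eq_zero]
  rw [hceq]
  constructor
  · intro h3
    have htop : LinearMap.ker (crossProduct c) = ⊤ := by
      apply Submodule.eq_top_of_finrank_eq
      rw [h3, Module.finrank_fin_fun]
    have hall : ∀ u : Fin 3 → ℝ, c ⨯₃ u = 0 := by
      intro u
      have hmem : u ∈ LinearMap.ker (crossProduct c) := htop ▸ Submodule.mem_top
      exact hmem
    have g0 := hall ![1,0,0]
    have g1 := hall ![0,1,0]
    have k0 := congrFun g1 2
    have k1 := congrFun g0 2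
    have k2 := congrFun g0 1
    simp [cross_apply, vecHead, vecTail] at k0 k1 k2
    funext i
    fin_cases i <;> simp <;> linarith
  · intro h0
    have hker : LinearMap.ker (crossProduct c) = ⊤ := by
      rw [h0]
      ext u; simp
    rw [hker, finrank_top, Module.finrank_fin_fun]

/-- every subspace of the form `(a,b)₋` is a maximal totally isotropic
subspace of dimension 4 for `q8`, and `(a,b)₊ ∩ (a',b')₋` has dimension 3 iff
`a' − a = b × b'`. -/
theorem darboux_stmt8 :
    (∀ (a b : Fin 3 → ℝ) (W : Submodule ℝ V8), (W : Set V8) = minusSet a b →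
      (∀ w ∈ W, q8 w = 0) ∧ Module.finrank ℝ W = 4 ∧
        ∀ W' : Submodule ℝ V8, (∀ w ∈ W', q8 w = 0) → W ≤ W' → W' = W) ∧
    (∀ (a b a' b' : Fin 3 → ℝ) (Wp Wm : Submodule ℝ V8),
      (Wp : Set V8) = plusSet a b → (Wm : Set V8) = minusSet a' b' →
      (Module.finrank ℝ ↥(Wp ⊓ Wm) = 3 ↔ a' - a = b ⨯₃ b')) := by
  exact ⟨darboux_part1, darboux_part2⟩
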